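/- If a_1 < a_2 < ... < a_k are pairwise relatively prime natural numbers, each greater than 1 and at most n, and k ≥ π(√n) + 1, then at least one a_i is prime. -/

import Mathlib

theorem stmt_8 (k n : ℕ) (a : Fin k → ℕ) (hmono : StrictMono a)
    (h1 : ∀ i, 1 < a i) (hle : ∀ i, a i ≤ n)
    (hcop : ∀ i j, i ≠ j → Nat.Coprime (a i) (a j))
    (hk : Nat.primeCounting (Nat.sqrt n) + 1 ≤ k) :
    ∃ i, (a i).Prime := by
  by_contra h
  push_neg at h
  set f : Fin k → ℕ := fun i => (a i).minFac with hf
  have hne : ∀ i, a i ≠ 1 := fun i => (h1 i).ne'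
  have hfp : ∀ i, (f i).Prime := fun i => Nat.minFac_prime (hne i)
  have hfle : ∀ i, f i ≤ Nat.sqrt n := by
    intro i
    rw [Nat.le_sqrt]
    have h2 : f i * f i ≤ a i := by
      have := Nat.minFac_sq_le_self (Nat.lt_of_lt_of_le Nat.one_pos (h1 i).le) (h i)
      simpa [sq] using this
    exact h2.trans (hle i)
  have hinj : Function.Injective f := by
    intro i j hij
    by_contra hne2
    have hc := hcop i j hne2
    have d1 : f i ∣ a i := Nat.minFac_dvd _
    have d2 : f i ∣ a j := hij ▸ Nat.minFac_dvd (a j)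
    have heq : f i = 1 := Nat.Coprime.eq_one_of_dvd (Nat.Coprime.coprime_dvd_left d1 hc) d2
    exact (hfp i).one_lt.ne' heq
  have hcard : k ≤ Nat.primeCounting (Nat.sqrt n) := by
    have : Fintype.card (Fin k) ≤ (Finset.filter Nat.Prime (Finset.range (Nat.sqrt n + 1))).card := by
      classical
      have := Finset.card_le_card_of_injOn (s := Finset.univ)
        (t := Finset.filter Nat.Prime (Finset.range (Nat.sqrt n + 1))) f
        (fun i _ => by
          simp only [Finset.mem_coe, Finset.mem_filter, Finset.mem_range]
          exact ⟨Nat.lt_succ_of_le (hfle i), hfp i⟩)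
        (fun i _ j _ hij => hinj hij)
      simpa [Finset.card_univ] using this
    simpa [Nat.primeCounting, Nat.primeCounting', Nat.count_eq_card_filter_range] using this
  omega
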